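/- (Explicit harmonic projection of |u|^{2s}·P_k·Q_i.) Let m = p + q with p, q ≥ 1, let s, k, i ∈ ℕ, let P_k be a harmonic polynomial in the u-variables homogeneous of degree k, and Q_i a harmonic polynomial in the v-variables homogeneous of degree i. Set λ := (-1)^s · 2^s · s! / ∏_{t=0}^{s-1}(2s + 2k + 2i + m - 2 + 2t), and for 0 ≤ j ≤ s set b_j := (∏_{t=0}^{j-1}(2k + p - 2 + 2s - 2t))/(2^j·j!) · (∏_{t=0}^{s-j-1}(2i + q - 2 + 2s - 2t))/(2^{s-j}·(s-j)!). Then H := λ · ∑_{j=0}^{s} (-1)^{s-j}·b_j·|v|^{2j}·|u|^{2(s-j)}·P_k·Q_i is harmonic in all m variables, and |u|^{2s}·P_k·Q_i - H = r²·R for some polynomial R. (H is the expansion in powers of |u|², |v|² of λ·r^{2s}·P_s^{(k+(p-2)/2, i+(q-2)/2)}((|v|²-|u|²)/(|v|²+|u|²))·P_k·Q_i, where P_s^{(α,β)} is a Jacobi polynomial.) -/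

import Mathlib

open MvPolynomial Finset

noncomputable section

/-- The full Laplacian `ΔP = ∑ ∂_i² P`. -/
def lap (m : ℕ) (P : MvPolynomial (Fin m) ℂ) : MvPolynomial (Fin m) ℂ :=
  ∑ i, pderiv i (pderiv i P)

/-- The polynomial `r² = ∑ X_i²`. -/
def r2 (m : ℕ) : MvPolynomial (Fin m) ℂ := ∑ i, X i ^ 2

/-- The Laplacian in the `u`-variables (the first `p` variables). -/
def lapU (p q : ℕ) (F : MvPolynomial (Fin (p + q)) ℂ) : MvPolynomial (Fin (p + q)) ℂ :=
  ∑ i ∈ univ.filter (fun i : Fin (p + q) => (i : ℕ) < p), pderiv i (pderiv i F)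

/-- The Laplacian in the `v`-variables (the last `q` variables). -/
def lapV (p q : ℕ) (F : MvPolynomial (Fin (p + q)) ℂ) : MvPolynomial (Fin (p + q)) ℂ :=
  ∑ i ∈ univ.filter (fun i : Fin (p + q) => p ≤ (i : ℕ)), pderiv i (pderiv i F)

/-- `|u|² = ∑_{i<p} X_i²`. -/
def u2 (p q : ℕ) : MvPolynomial (Fin (p + q)) ℂ :=
  ∑ i ∈ univ.filter (fun i : Fin (p + q) => (i : ℕ) < p), X i ^ 2

/-- `|v|² = ∑_{i≥p} X_i²`. -/
def v2 (p q : ℕ) : MvPolynomial (Fin (p + q)) ℂ :=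
  ∑ i ∈ univ.filter (fun i : Fin (p + q) => p ≤ (i : ℕ)), X i ^ 2

/-- The Fischer inner product `⟨P,Q⟩ = ∑_α (∏_i α_i!)·conj(coeff_α P)·coeff_α Q`. -/
def fischer (m : ℕ) (P Q : MvPolynomial (Fin m) ℂ) : ℂ :=
  ∑ α ∈ P.support, (∏ i, ((α i).factorial : ℂ)) * (starRingEnd ℂ) (coeff α P) * coeff α Q

/-! ### Auxiliary lemmas -/

section Aux

variable {n m : ℕ}

lemma euler_monomial (s : Fin n →₀ ℕ) (c : ℂ) :
    ∑ i, X i * pderiv i (monomial s c) = monomial s (c * ∑ i, ((s i : ℂ))) := by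
  have h : ∀ i : Fin n, X i * pderiv i (monomial s c) = monomial s (c * (s i : ℂ)) := by
    intro i
    rw [pderiv_monomial]
    rcases Nat.eq_zero_or_pos (s i) with h0 | h1
    · simp [h0]
    · rw [X, monomial_mul, one_mul]
      congr 1
      · rw [add_comm, tsub_add_cancel_of_le]
        rwa [Finsupp.single_le_iff]
  rw [Finset.sum_congr rfl (fun i _ => h i), Finset.mul_sum, map_sum]

lemma euler {P : MvPolynomial (Fin n) ℂ} {d : ℕ} (h : P.IsHomogeneous d) :
    ∑ i, X i * pderiv i P = (d : ℂ) • P := by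
  conv_lhs => rw [P.as_sum]
  simp only [map_sum, Finset.mul_sum]
  rw [Finset.sum_comm]
  have : ∀ s ∈ P.support, ∑ i, X i * pderiv i (monomial s (coeff s P))
      = (d:ℂ) • monomial s (coeff s P) := by
    intro s hs
    rw [euler_monomial]
    have hd : ∑ i, ((s i : ℂ)) = (d : ℂ) := by
      have := h (MvPolynomial.mem_support_iff.mp hs)
      have hdeg : s.degree = d := by rwa [Finsupp.degree_eq_weight_one]
      rw [← hdeg, Finsupp.degree_apply]
      rw [Finset.sum_subset (Finset.subset_univ s.support)]
      · push_cast; rfl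
      · intro x _ hx
        simp [Finsupp.notMem_support_iff.mp hx]
    rw [hd, smul_monomial, smul_eq_mul, mul_comm]
  rw [Finset.sum_congr rfl this, ← Finset.smul_sum, ← P.as_sum]

lemma lap_smul (c : ℂ) (F : MvPolynomial (Fin m) ℂ) : lap m (c • F) = c • lap m F := by
  simp [lap, Finset.smul_sum]

lemma lap_sum {α : Type*} (S : Finset α) (f : α → MvPolynomial (Fin m) ℂ) :
    lap m (∑ j ∈ S, f j) = ∑ j ∈ S, lap m (f j) := by
  simp only [lap, map_sum]
  rw [Finset.sum_comm]

lemma pderiv_supported {S : Set (Fin m)} {F : MvPolynomial (Fin m) ℂ}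
    (hF : F ∈ MvPolynomial.supported ℂ S) {i : Fin m} (hi : i ∉ S) : pderiv i F = 0 :=
  pderiv_eq_zero_of_notMem_vars (fun hv => hi (MvPolynomial.mem_supported.mp hF hv))

lemma lap_mul_sep {F G : MvPolynomial (Fin m) ℂ}
    (h : ∀ i : Fin m, pderiv i F = 0 ∨ pderiv i G = 0) :
    lap m (F * G) = lap m F * G + F * lap m G := by
  have key : ∀ i : Fin m, pderiv i (pderiv i (F * G))
      = pderiv i (pderiv i F) * G + F * pderiv i (pderiv i G) := by
    intro i
    rcases h i with h0 | h0
    · rw [pderiv_mul, h0, zero_mul, zero_add, pderiv_mul, h0, map_zero, zero_mul,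
        zero_mul, zero_add]
    · rw [pderiv_mul, h0, mul_zero, add_zero, pderiv_mul, h0, map_zero, mul_zero,
        mul_zero, add_zero]
  simp only [lap, key, Finset.sum_add_distrib, ← Finset.sum_mul, ← Finset.mul_sum]

lemma pderiv_sumsq (S : Finset (Fin m)) (j : Fin m) :
    pderiv j (∑ i ∈ S, (X i : MvPolynomial (Fin m) ℂ) ^ 2)
      = if j ∈ S then 2 * X j else 0 := by
  rw [map_sum]
  have : ∀ i ∈ S, pderiv j ((X i : MvPolynomial (Fin m) ℂ) ^ 2)
      = if i = j then 2 * X j else 0 := by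
    intro i _
    rcases eq_or_ne i j with rfl | hne
    · simp [pderiv_pow]
    · simp [pderiv_pow, hne]
  rw [Finset.sum_congr rfl this, Finset.sum_ite_eq' S j (fun _ => 2 * X j)]

lemma sumsq_supported (S : Finset (Fin m)) :
    (∑ i ∈ S, (X i : MvPolynomial (Fin m) ℂ) ^ 2) ∈ MvPolynomial.supported ℂ (S : Set (Fin m)) :=
  Subalgebra.sum_mem _ (fun i hi => pow_mem (MvPolynomial.X_mem_supported.mpr hi) 2)

lemma sumsq_hom (S : Finset (Fin m)) :
    (∑ i ∈ S, (X i : MvPolynomial (Fin m) ℂ) ^ 2).IsHomogeneous 2 :=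
  MvPolynomial.IsHomogeneous.sum _ _ _
    (fun i _ => by simpa using (MvPolynomial.isHomogeneous_X ℂ i).pow 2)

lemma lap_sumsq (S : Finset (Fin m)) :
    lap m (∑ i ∈ S, (X i : MvPolynomial (Fin m) ℂ) ^ 2) = (2 * (S.card : ℂ)) • 1 := by
  unfold lap
  have : ∀ j : Fin m, pderiv j (pderiv j (∑ i ∈ S, (X i : MvPolynomial (Fin m) ℂ) ^ 2))
      = if j ∈ S then 2 else 0 := by
    intro j
    rw [pderiv_sumsq]
    rcases em (j ∈ S) with hj | hj
    · simp only [hj, if_true, pderiv_mul, pderiv_X_self, mul_one]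
      rw [show (2 : MvPolynomial (Fin m) ℂ) = C 2 from (map_ofNat C 2).symm, pderiv_C,
        zero_mul, zero_add, (map_ofNat C 2 : C (2:ℂ) = 2)]
    · simp [hj]
  rw [Finset.sum_congr rfl (fun j _ => this j), Finset.sum_ite_mem, Finset.univ_inter,
    Finset.sum_const]
  rw [nsmul_eq_mul, smul_eq_C_mul, map_mul, mul_one, ← MvPolynomial.C_eq_coe_nat, mul_comm,
    (map_ofNat C 2 : C (2:ℂ) = 2)]

lemma lap_mul (F G : MvPolynomial (Fin m) ℂ) :
    lap m (F * G) = lap m F * G + 2 * ∑ i, pderiv i F * pderiv i G + F * lap m G := by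
  have key : ∀ i : Fin m, pderiv i (pderiv i (F * G))
      = pderiv i (pderiv i F) * G + 2 * (pderiv i F * pderiv i G)
        + F * pderiv i (pderiv i G) := by
    intro i
    rw [pderiv_mul, map_add, pderiv_mul, pderiv_mul]
    ring
  rw [lap]
  rw [Finset.sum_congr rfl (fun i _ => key i), Finset.sum_add_distrib, Finset.sum_add_distrib,
    ← Finset.sum_mul, ← Finset.mul_sum, ← Finset.mul_sum]
  rfl

lemma lap_pow_mul (S : Finset (Fin m)) (P : MvPolynomial (Fin m) ℂ)
    (hsupp : P ∈ MvPolynomial.supported ℂ (S : Set (Fin m)))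
    (hharm : lap m P = 0) {d : ℕ} (hhom : P.IsHomogeneous d) :
    ∀ a : ℕ, lap m ((∑ i ∈ S, X i ^ 2) ^ a * P)
      = (2 * (a:ℂ) * (2*(a:ℂ) + 2*(d:ℂ) + (S.card:ℂ) - 2)) •
        ((∑ i ∈ S, X i ^ 2) ^ (a-1) * P) := by
  set W := ∑ i ∈ S, (X i : MvPolynomial (Fin m) ℂ) ^ 2 with hW
  intro a
  induction a with
  | zero => simp [hharm]
  | succ a ih =>
    have hGsupp : W ^ a * P ∈ MvPolynomial.supported ℂ (S : Set (Fin m)) :=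
      mul_mem (pow_mem (sumsq_supported S) a) hsupp
    have hGhom : (W ^ a * P).IsHomogeneous (2 * a + d) := by
      simpa using ((sumsq_hom S).pow a).mul hhom
    have hstep : W ^ (a+1) * P = W * (W ^ a * P) := by rw [pow_succ']; ring
    rw [hstep, lap_mul, lap_sumsq, smul_mul_assoc, one_mul, ih]
    have hmid : (2 : MvPolynomial (Fin m) ℂ) * ∑ i, pderiv i W * pderiv i (W ^ a * P)
        = ((4:ℂ) * ((2*a+d : ℕ):ℂ)) • (W ^ a * P) := by
      have h1 : ∀ i : Fin m, pderiv i W * pderiv i (W ^ a * P)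
          = 2 * (X i * pderiv i (W ^ a * P)) := by
        intro i
        rw [hW, pderiv_sumsq]
        rcases em (i ∈ S) with hi | hi
        · simp [hi, mul_assoc]
        · rw [if_neg hi, zero_mul, ← hW, pderiv_supported hGsupp hi, mul_zero, mul_zero]
      rw [Finset.sum_congr rfl (fun i _ => h1 i), ← Finset.mul_sum, euler hGhom,
        mul_smul_comm, mul_smul_comm,
        show (2:MvPolynomial (Fin m) ℂ) * (2 * (W ^ a * P)) = (4:ℂ) • (W ^ a * P) from by
          rw [← mul_assoc, smul_eq_C_mul, (map_ofNat C 4 : C (4:ℂ) = 4)]; norm_num,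
        smul_smul, mul_comm]
    rw [hmid, mul_smul_comm]
    rcases a with _ | a'
    · norm_num
      rw [← add_smul]
      congr 1
      push_cast
      ring
    · rw [← mul_assoc, ← pow_succ']
      simp only [Nat.add_sub_cancel]
      rw [← add_smul, ← add_smul]
      congr 1
      push_cast
      ring

lemma key_scalar (p q s k i : ℕ) (b : ℕ → ℂ)
    (hb : ∀ j, b j =
      (∏ t ∈ range j, (2 * (k : ℂ) + (p : ℂ) - 2 + 2 * (s : ℂ) - 2 * (t : ℂ))) /
          (2 ^ j * (Nat.factorial j : ℂ)) *
        ((∏ t ∈ range (s - j), (2 * (i : ℂ) + (q : ℂ) - 2 + 2 * (s : ℂ) - 2 * (t : ℂ))) /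
          (2 ^ (s - j) * (Nat.factorial (s - j) : ℂ))))
    (j : ℕ) (hj : j < s) :
    (-1:ℂ)^(s-j) * b j * (2 * ((s-j : ℕ):ℂ) * (2*((s-j : ℕ):ℂ) + 2*(k:ℂ) + (p:ℂ) - 2))
    + (-1:ℂ)^(s-(j+1)) * b (j+1) *
        (2 * ((j+1 : ℕ):ℂ) * (2*((j+1 : ℕ):ℂ) + 2*(i:ℂ) + (q:ℂ) - 2)) = 0 := by
  obtain ⟨n, rfl⟩ : ∃ n, s = j + n + 1 := ⟨s - j - 1, by omega⟩
  have hbj := hb j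
  have hbj1 := hb (j+1)
  simp only [show j + n + 1 - j = n + 1 from by omega] at hbj
  simp only [show j + n + 1 - (j+1) = n from by omega] at hbj1
  rw [hbj, hbj1]
  simp only [show j + n + 1 - j = n + 1 from by omega, show j + n + 1 - (j+1) = n from by omega]
  rw [Finset.prod_range_succ
      (fun t => (2 * (i : ℂ) + (q : ℂ) - 2 + 2 * ((j+n+1 : ℕ) : ℂ) - 2 * (t : ℂ))),
    Finset.prod_range_succ
      (fun t => (2 * (k : ℂ) + (p : ℂ) - 2 + 2 * ((j+n+1 : ℕ) : ℂ) - 2 * (t : ℂ)))]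
  have hf1 : ((Nat.factorial j : ℂ)) ≠ 0 := Nat.cast_ne_zero.mpr (Nat.factorial_ne_zero j)
  have hf2 : ((Nat.factorial n : ℂ)) ≠ 0 := Nat.cast_ne_zero.mpr (Nat.factorial_ne_zero n)
  have h2j : ((2:ℂ))^j ≠ 0 := pow_ne_zero _ two_ne_zero
  have h2n : ((2:ℂ))^n ≠ 0 := pow_ne_zero _ two_ne_zero
  rw [Nat.factorial_succ j, Nat.factorial_succ n, pow_succ, pow_succ]
  set c1 := ∏ t ∈ range j, (2 * (k : ℂ) + (p : ℂ) - 2 + 2 * ((j+n+1 : ℕ) : ℂ) - 2 * (t : ℂ))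
    with hc1
  set c2 := ∏ t ∈ range n, (2 * (i : ℂ) + (q : ℂ) - 2 + 2 * ((j+n+1 : ℕ) : ℂ) - 2 * (t : ℂ))
    with hc2
  have hj1 : ((j:ℂ)+1) ≠ 0 := Nat.cast_add_one_ne_zero j
  have hn1 : ((n:ℂ)+1) ≠ 0 := Nat.cast_add_one_ne_zero n
  push_cast
  field_simp
  ring

lemma fall_vdm (X Y : ℂ) (s : ℕ) :
    ∑ j ∈ range (s+1), (s.choose j : ℂ) * (∏ t ∈ range j, (X - 2*(t:ℂ))) *
      (∏ t ∈ range (s-j), (Y - 2*(t:ℂ))) = ∏ t ∈ range s, (X + Y - 2*(t:ℂ)) := by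
  induction s with
  | zero => simp
  | succ s ih =>
    rw [Finset.sum_range_succ' (fun j => ((s+1).choose j : ℂ) *
      (∏ t ∈ range j, (X - 2*(t:ℂ))) * (∏ t ∈ range (s+1-j), (Y - 2*(t:ℂ))))]
    have hsplit : ∀ j ∈ range (s+1),
        ((s+1).choose (j+1) : ℂ) * (∏ t ∈ range (j+1), (X - 2*(t:ℂ))) *
          (∏ t ∈ range (s+1-(j+1)), (Y - 2*(t:ℂ)))
        = (X - 2*(j:ℂ)) * ((s.choose j : ℂ) * (∏ t ∈ range j, (X - 2*(t:ℂ))) *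
            (∏ t ∈ range (s-j), (Y - 2*(t:ℂ))))
          + (s.choose (j+1) : ℂ) * (∏ t ∈ range (j+1), (X - 2*(t:ℂ))) *
            (∏ t ∈ range (s+1-(j+1)), (Y - 2*(t:ℂ))) := by
      intro j hj
      rw [Nat.choose_succ_succ, show s+1-(j+1) = s-j from by omega, Finset.prod_range_succ]
      push_cast
      ring
    rw [Finset.sum_congr rfl hsplit, Finset.sum_add_distrib, add_assoc]
    have hg : (∑ j ∈ range (s+1), ((s.choose (j+1) : ℂ) * (∏ t ∈ range (j+1), (X - 2*(t:ℂ))) *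
            (∏ t ∈ range (s+1-(j+1)), (Y - 2*(t:ℂ)))))
          + ((s+1).choose 0 : ℂ) * (∏ t ∈ range 0, (X - 2*(t:ℂ))) *
            (∏ t ∈ range (s+1-0), (Y - 2*(t:ℂ)))
        = ∑ j ∈ range (s+1), ((s.choose j : ℂ) * (∏ t ∈ range j, (X - 2*(t:ℂ))) *
            (∏ t ∈ range (s+1-j), (Y - 2*(t:ℂ)))) := by
      have h0 : ((s+1).choose 0 : ℂ) = (s.choose 0 : ℂ) := by simp
      rw [h0,
        ← Finset.sum_range_succ' (fun j => ((s.choose j : ℂ) *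
          (∏ t ∈ range j, (X - 2*(t:ℂ))) * (∏ t ∈ range (s+1-j), (Y - 2*(t:ℂ))))) (s+1),
        Finset.sum_range_succ]
      simp
    rw [hg]
    have hcomb : ∀ j ∈ range (s+1),
        (X - 2*(j:ℂ)) * ((s.choose j : ℂ) * (∏ t ∈ range j, (X - 2*(t:ℂ))) *
            (∏ t ∈ range (s-j), (Y - 2*(t:ℂ))))
          + (s.choose j : ℂ) * (∏ t ∈ range j, (X - 2*(t:ℂ))) *
            (∏ t ∈ range (s+1-j), (Y - 2*(t:ℂ)))
        = (X + Y - 2*(s:ℂ)) * ((s.choose j : ℂ) * (∏ t ∈ range j, (X - 2*(t:ℂ))) *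
            (∏ t ∈ range (s-j), (Y - 2*(t:ℂ)))) := by
      intro j hj
      have hjs : j ≤ s := by simpa using Nat.lt_succ_iff.mp (mem_range.mp hj)
      rw [show s+1-j = (s-j)+1 from by omega, Finset.prod_range_succ,
        Nat.cast_sub hjs]
      ring
    rw [← Finset.sum_add_distrib, Finset.sum_congr rfl hcomb, ← Finset.mul_sum, ih,
      Finset.prod_range_succ]
    ring

lemma sum_b_eq (p q s k i : ℕ) (hp : 1 ≤ p) (hq : 1 ≤ q) (b : ℕ → ℂ)
    (hb : ∀ j, b j =
      (∏ t ∈ range j, (2 * (k : ℂ) + (p : ℂ) - 2 + 2 * (s : ℂ) - 2 * (t : ℂ))) /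
          (2 ^ j * (Nat.factorial j : ℂ)) *
        ((∏ t ∈ range (s - j), (2 * (i : ℂ) + (q : ℂ) - 2 + 2 * (s : ℂ) - 2 * (t : ℂ))) /
          (2 ^ (s - j) * (Nat.factorial (s - j) : ℂ))))
    (lam : ℂ)
    (hlam : lam = (-1) ^ s * 2 ^ s * (Nat.factorial s : ℂ) /
      ∏ t ∈ range s,
        (2 * (s : ℂ) + 2 * (k : ℂ) + 2 * (i : ℂ) + (p : ℂ) + (q : ℂ) - 2 + 2 * (t : ℂ))) :
    lam * ((-1:ℂ)^s * ∑ j ∈ range (s+1), b j) = 1 := by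
  obtain ⟨p', rfl⟩ : ∃ p', p = p' + 1 := ⟨p - 1, by omega⟩
  obtain ⟨q', rfl⟩ : ∃ q', q = q' + 1 := ⟨q - 1, by omega⟩
  set D : ℂ := ∏ t ∈ range s,
      (2 * (s : ℂ) + 2 * (k : ℂ) + 2 * (i : ℂ) + ((p'+1 : ℕ) : ℂ) + ((q'+1 : ℕ) : ℂ) - 2
        + 2 * (t : ℂ)) with hD
  have hDne : D ≠ 0 := by
    rw [hD]
    apply Finset.prod_ne_zero_iff.mpr
    intro t ht
    have hs1 : 1 ≤ s := by
      have := mem_range.mp ht; omega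
    have : (2 * (s:ℂ) + 2 * (k:ℂ) + 2 * (i:ℂ) + ((p'+1:ℕ):ℂ) + ((q'+1:ℕ):ℂ) - 2 + 2 * (t:ℂ))
        = ((2*s + 2*k + 2*i + p' + q' + 2*t : ℕ) : ℂ) := by
      push_cast; ring
    rw [this]
    exact Nat.cast_ne_zero.mpr (by omega)
  have key : ((2:ℂ)^s * (Nat.factorial s : ℂ)) * ∑ j ∈ range (s+1), b j = D := by
    have hterm : ∀ j ∈ range (s+1), ((2:ℂ)^s * (Nat.factorial s : ℂ)) * b j
        = (s.choose j : ℂ) *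
          (∏ t ∈ range j, ((2 * (k:ℂ) + ((p'+1:ℕ):ℂ) - 2 + 2*(s:ℂ)) - 2*(t:ℂ))) *
          (∏ t ∈ range (s-j), ((2 * (i:ℂ) + ((q'+1:ℕ):ℂ) - 2 + 2*(s:ℂ)) - 2*(t:ℂ))) := by
      intro j hj
      have hjs : j ≤ s := by have := mem_range.mp hj; omega
      rw [hb j]
      have hfac : (Nat.factorial s : ℂ)
          = (s.choose j : ℂ) * (Nat.factorial j : ℂ) * (Nat.factorial (s-j) : ℂ) := by
        rw [← Nat.cast_mul, ← Nat.cast_mul, Nat.choose_mul_factorial_mul_factorial hjs]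
      have hpow : ((2:ℂ))^s = 2^j * 2^(s-j) := by
        rw [← pow_add]; congr 1; omega
      rw [hfac, hpow]
      have hne1 : ((Nat.factorial j : ℂ)) ≠ 0 := Nat.cast_ne_zero.mpr (Nat.factorial_ne_zero j)
      have hne2 : ((Nat.factorial (s-j) : ℂ)) ≠ 0 :=
        Nat.cast_ne_zero.mpr (Nat.factorial_ne_zero (s-j))
      have hne3 : ((2:ℂ))^j ≠ 0 := pow_ne_zero _ two_ne_zero
      have hne4 : ((2:ℂ))^(s-j) ≠ 0 := pow_ne_zero _ two_ne_zero
      have harg1 : ∀ t ∈ range j, (2 * (k:ℂ) + ((p'+1:ℕ):ℂ) - 2 + 2*(s:ℂ) - 2*(t:ℂ))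
          = ((2 * (k:ℂ) + ((p'+1:ℕ):ℂ) - 2 + 2*(s:ℂ)) - 2*(t:ℂ)) := fun t _ => by ring
      have harg2 : ∀ t ∈ range (s-j), (2 * (i:ℂ) + ((q'+1:ℕ):ℂ) - 2 + 2*(s:ℂ) - 2*(t:ℂ))
          = ((2 * (i:ℂ) + ((q'+1:ℕ):ℂ) - 2 + 2*(s:ℂ)) - 2*(t:ℂ)) := fun t _ => by ring
      rw [Finset.prod_congr rfl harg1, Finset.prod_congr rfl harg2]
      field_simp
    rw [Finset.mul_sum, Finset.sum_congr rfl hterm,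
      fall_vdm (2 * (k:ℂ) + ((p'+1:ℕ):ℂ) - 2 + 2*(s:ℂ))
        (2 * (i:ℂ) + ((q'+1:ℕ):ℂ) - 2 + 2*(s:ℂ)) s,
      hD, ← Finset.prod_range_reflect (fun t => (2 * (s : ℂ) + 2 * (k : ℂ) + 2 * (i : ℂ)
        + ((p'+1 : ℕ) : ℂ) + ((q'+1 : ℕ) : ℂ) - 2 + 2 * (t : ℂ))) s]
    apply Finset.prod_congr rfl
    intro t ht
    have : ((s - 1 - t : ℕ) : ℂ) = (s:ℂ) - 1 - (t:ℂ) := by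
      have h1 : 1 + t ≤ s := by have := mem_range.mp ht; omega
      rw [Nat.sub_sub, Nat.cast_sub h1]
      push_cast; ring
    rw [this]
    push_cast
    ring
  have hfacs : ((Nat.factorial s : ℂ)) ≠ 0 := Nat.cast_ne_zero.mpr (Nat.factorial_ne_zero s)
  have h2s : ((2:ℂ))^s ≠ 0 := pow_ne_zero _ two_ne_zero
  have hsgn : ((-1:ℂ))^s * ((-1:ℂ))^s = 1 := by
    rw [← pow_add, ← two_mul, pow_mul]; norm_num
  have hsum : ∑ j ∈ range (s+1), b j = D / ((2:ℂ)^s * (Nat.factorial s : ℂ)) := by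
    rw [eq_div_iff (mul_ne_zero h2s hfacs)]
    linear_combination key
  rw [hlam, hsum]
  field_simp
  linear_combination hsgn

lemma cardU (p q : ℕ) : (univ.filter (fun i : Fin (p + q) => (i : ℕ) < p)).card = p := by
  have : (univ.filter (fun i : Fin (p + q) => (i : ℕ) < p))
      = Finset.map (Fin.castAddEmb q) univ := by
    ext i
    simp only [mem_filter, mem_univ, true_and, mem_map]
    constructor
    · intro hi
      exact ⟨⟨(i:ℕ), hi⟩, by simp [Fin.castAddEmb, Fin.ext_iff]⟩
    · rintro ⟨j, rfl⟩
      simp [Fin.castAddEmb]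
  rw [this, Finset.card_map, Finset.card_univ, Fintype.card_fin]

lemma cardV (p q : ℕ) : (univ.filter (fun i : Fin (p + q) => p ≤ (i : ℕ))).card = q := by
  have h := Finset.card_filter_add_card_filter_not
    (s := (univ : Finset (Fin (p+q)))) (p := fun i : Fin (p+q) => (i:ℕ) < p)
  have h2 : (univ.filter (fun i : Fin (p + q) => ¬ (i : ℕ) < p))
      = (univ.filter (fun i : Fin (p + q) => p ≤ (i : ℕ))) := by
    apply Finset.filter_congr; intro i _; simp [not_lt]
  rw [cardU, h2, Finset.card_univ, Fintype.card_fin] at h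
  omega

end Aux

theorem stmt9 (p q s k i : ℕ) (hp : 1 ≤ p) (hq : 1 ≤ q)
    (Pk Qi : MvPolynomial (Fin (p + q)) ℂ)
    (hPk_supp : Pk ∈ MvPolynomial.supported ℂ {j : Fin (p + q) | (j : ℕ) < p})
    (hPk_harm : lap (p + q) Pk = 0) (hPk_hom : Pk.IsHomogeneous k)
    (hQi_supp : Qi ∈ MvPolynomial.supported ℂ {j : Fin (p + q) | p ≤ (j : ℕ)})
    (hQi_harm : lap (p + q) Qi = 0) (hQi_hom : Qi.IsHomogeneous i)
    (lam : ℂ)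
    (hlam : lam = (-1) ^ s * 2 ^ s * (Nat.factorial s : ℂ) /
      ∏ t ∈ range s,
        (2 * (s : ℂ) + 2 * (k : ℂ) + 2 * (i : ℂ) + (p : ℂ) + (q : ℂ) - 2 + 2 * (t : ℂ)))
    (b : ℕ → ℂ)
    (hb : ∀ j, b j =
      (∏ t ∈ range j, (2 * (k : ℂ) + (p : ℂ) - 2 + 2 * (s : ℂ) - 2 * (t : ℂ))) /
          (2 ^ j * (Nat.factorial j : ℂ)) *
        ((∏ t ∈ range (s - j), (2 * (i : ℂ) + (q : ℂ) - 2 + 2 * (s : ℂ) - 2 * (t : ℂ))) /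
          (2 ^ (s - j) * (Nat.factorial (s - j) : ℂ))))
    (H : MvPolynomial (Fin (p + q)) ℂ)
    (hH : H = lam • ∑ j ∈ range (s + 1),
      ((-1 : ℂ) ^ (s - j) * b j) • (v2 p q ^ j * u2 p q ^ (s - j) * Pk * Qi)) :
    lap (p + q) H = 0 ∧ ∃ R, u2 p q ^ s * Pk * Qi - H = r2 (p + q) * R := by
  classical
  set SU := univ.filter (fun i : Fin (p + q) => (i : ℕ) < p) with hSUdef
  set SV := univ.filter (fun i : Fin (p + q) => p ≤ (i : ℕ)) with hSVdef
  have hu2 : u2 p q = ∑ i ∈ SU, X i ^ 2 := rfl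
  have hv2 : v2 p q = ∑ i ∈ SV, X i ^ 2 := rfl
  have hSUset : (SU : Set (Fin (p+q))) = {j : Fin (p + q) | (j : ℕ) < p} := by
    ext x; simp [hSUdef]
  have hSVset : (SV : Set (Fin (p+q))) = {j : Fin (p + q) | p ≤ (j : ℕ)} := by
    ext x; simp [hSVdef]
  have hSUcard : SU.card = p := by rw [hSUdef]; exact cardU p q
  have hSVcard : SV.card = q := by rw [hSVdef]; exact cardV p q
  have hPk_supp' : Pk ∈ MvPolynomial.supported ℂ (SU : Set (Fin (p+q))) := by
    rw [hSUset]; exact hPk_supp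
  have hQi_supp' : Qi ∈ MvPolynomial.supported ℂ (SV : Set (Fin (p+q))) := by
    rw [hSVset]; exact hQi_supp
  have hFsupp : ∀ a : ℕ, u2 p q ^ a * Pk ∈ MvPolynomial.supported ℂ (SU : Set (Fin (p+q))) :=
    fun a => mul_mem (pow_mem (by rw [hu2]; exact sumsq_supported SU) a) hPk_supp'
  have hGsupp : ∀ a : ℕ, v2 p q ^ a * Qi ∈ MvPolynomial.supported ℂ (SV : Set (Fin (p+q))) :=
    fun a => mul_mem (pow_mem (by rw [hv2]; exact sumsq_supported SV) a) hQi_supp'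
  have hsep : ∀ (F G : MvPolynomial (Fin (p+q)) ℂ),
      F ∈ MvPolynomial.supported ℂ (SU : Set (Fin (p+q))) →
      G ∈ MvPolynomial.supported ℂ (SV : Set (Fin (p+q))) →
      ∀ x : Fin (p+q), pderiv x F = 0 ∨ pderiv x G = 0 := by
    intro F G hF hG x
    rcases lt_or_ge (x:ℕ) p with hx | hx
    · right
      refine pderiv_supported hG ?_
      rw [hSVset]
      simp only [Set.mem_setOf_eq]
      omega
    · left
      refine pderiv_supported hF ?_
      rw [hSUset]
      simp only [Set.mem_setOf_eq]
      omega
  -- per-term Laplacian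
  have hlapterm : ∀ j : ℕ, lap (p+q) (v2 p q ^ j * u2 p q ^ (s-j) * Pk * Qi)
      = (2 * ((s-j : ℕ):ℂ) * (2*((s-j : ℕ):ℂ) + 2*(k:ℂ) + (p:ℂ) - 2)) •
          ((u2 p q ^ (s-j-1) * Pk) * (v2 p q ^ j * Qi))
        + (2 * ((j : ℕ):ℂ) * (2*((j : ℕ):ℂ) + 2*(i:ℂ) + (q:ℂ) - 2)) •
          ((u2 p q ^ (s-j) * Pk) * (v2 p q ^ (j-1) * Qi)) := by
    intro j
    have hre : v2 p q ^ j * u2 p q ^ (s-j) * Pk * Qi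
        = (u2 p q ^ (s-j) * Pk) * (v2 p q ^ j * Qi) := by ring
    rw [hre, lap_mul_sep (hsep _ _ (hFsupp (s-j)) (hGsupp j))]
    rw [hu2, hv2, lap_pow_mul SU Pk hPk_supp' hPk_harm hPk_hom (s-j),
      lap_pow_mul SV Qi hQi_supp' hQi_harm hQi_hom j, hSUcard, hSVcard,
      smul_mul_assoc, mul_smul_comm]
  constructor
  · -- harmonicity
    rw [hH, lap_smul, lap_sum]
    have hterm2 : ∀ j ∈ range (s+1),
        lap (p+q) (((-1:ℂ)^(s-j) * b j) • (v2 p q ^ j * u2 p q ^ (s-j) * Pk * Qi))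
        = (((-1:ℂ)^(s-j) * b j) * (2 * ((s-j:ℕ):ℂ) * (2*((s-j:ℕ):ℂ) + 2*(k:ℂ) + (p:ℂ) - 2))) •
            ((u2 p q ^ (s-j-1) * Pk) * (v2 p q ^ j * Qi))
          + (((-1:ℂ)^(s-j) * b j) * (2 * ((j:ℕ):ℂ) * (2*((j:ℕ):ℂ) + 2*(i:ℂ) + (q:ℂ) - 2))) •
            ((u2 p q ^ (s-j) * Pk) * (v2 p q ^ (j-1) * Qi)) := by
      intro j _
      rw [lap_smul, hlapterm j, smul_add, smul_smul, smul_smul]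
    rw [Finset.sum_congr rfl hterm2, Finset.sum_add_distrib]
    rw [Finset.sum_range_succ (fun j =>
      (((-1:ℂ)^(s-j) * b j) * (2 * ((s-j:ℕ):ℂ) * (2*((s-j:ℕ):ℂ) + 2*(k:ℂ) + (p:ℂ) - 2))) •
            ((u2 p q ^ (s-j-1) * Pk) * (v2 p q ^ j * Qi)))]
    rw [Finset.sum_range_succ' (fun j =>
      (((-1:ℂ)^(s-j) * b j) * (2 * ((j:ℕ):ℂ) * (2*((j:ℕ):ℂ) + 2*(i:ℂ) + (q:ℂ) - 2))) •
            ((u2 p q ^ (s-j) * Pk) * (v2 p q ^ (j-1) * Qi)))]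
    have hAs : (((-1:ℂ)^(s-s) * b s) *
          (2 * ((s-s:ℕ):ℂ) * (2*((s-s:ℕ):ℂ) + 2*(k:ℂ) + (p:ℂ) - 2))) •
            ((u2 p q ^ (s-s-1) * Pk) * (v2 p q ^ s * Qi)) = 0 := by
      rw [Nat.sub_self]
      norm_num
    have hD0 : (((-1:ℂ)^(s-0) * b 0) *
          (2 * ((0:ℕ):ℂ) * (2*((0:ℕ):ℂ) + 2*(i:ℂ) + (q:ℂ) - 2))) •
            ((u2 p q ^ (s-0) * Pk) * (v2 p q ^ (0-1) * Qi)) = 0 := by norm_num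
    rw [hAs, hD0, add_zero, add_zero, ← Finset.sum_add_distrib]
    have hz : ∀ j ∈ range s,
        (((-1:ℂ)^(s-j) * b j) * (2 * ((s-j:ℕ):ℂ) * (2*((s-j:ℕ):ℂ) + 2*(k:ℂ) + (p:ℂ) - 2))) •
            ((u2 p q ^ (s-j-1) * Pk) * (v2 p q ^ j * Qi))
          + (((-1:ℂ)^(s-(j+1)) * b (j+1)) *
              (2 * ((j+1:ℕ):ℂ) * (2*((j+1:ℕ):ℂ) + 2*(i:ℂ) + (q:ℂ) - 2))) •
            ((u2 p q ^ (s-(j+1)) * Pk) * (v2 p q ^ ((j+1)-1) * Qi)) = 0 := by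
      intro j hj
      have hT : (u2 p q ^ (s-(j+1)) * Pk) * (v2 p q ^ ((j+1)-1) * Qi)
          = (u2 p q ^ (s-j-1) * Pk) * (v2 p q ^ j * Qi) := by
        rw [Nat.add_sub_cancel, Nat.sub_sub]
      rw [hT, ← add_smul, key_scalar p q s k i b hb j (mem_range.mp hj), zero_smul]
    rw [Finset.sum_congr rfl hz, Finset.sum_const_zero, smul_zero]
  · -- divisibility
    have hr2 : r2 (p+q) = u2 p q + v2 p q := by
      rw [r2, u2, v2,
        ← Finset.sum_filter_add_sum_filter_not univ (fun i : Fin (p + q) => (i : ℕ) < p)]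
      congr 1
      apply Finset.sum_congr _ (fun _ _ => rfl)
      apply Finset.filter_congr
      intro x _
      simp [not_lt]
    have hsum1 : ∑ j ∈ range (s+1), lam * b j * (-1:ℂ)^s = 1 := by
      have h := sum_b_eq p q s k i hp hq b hb lam hlam
      calc ∑ j ∈ range (s+1), lam * b j * (-1:ℂ)^s
          = lam * ((-1:ℂ)^s * ∑ j ∈ range (s+1), b j) := by
            rw [Finset.mul_sum, Finset.mul_sum]
            exact Finset.sum_congr rfl (fun j _ => by ring)
        _ = 1 := h
    have expand : ∀ j ∈ range (s+1),
        ((lam * b j * (-1:ℂ)^(s-j)) • (u2 p q ^ (s-j) * ((-(u2 p q))^j - v2 p q ^j)))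
          * (Pk * Qi)
        = (lam * b j * (-1:ℂ)^s) • (u2 p q ^ s * Pk * Qi)
          - lam • (((-1:ℂ)^(s-j) * b j) • (v2 p q ^ j * u2 p q ^ (s-j) * Pk * Qi)) := by
      intro j hj
      have hjs : j ≤ s := Nat.lt_succ_iff.mp (mem_range.mp hj)
      have hneg : (-(u2 p q))^j = ((-1:ℂ)^j) • (u2 p q)^j := by
        rw [neg_pow]
        rw [smul_eq_C_mul, map_pow, map_neg, map_one]
      have hpows : u2 p q ^ (s-j) * u2 p q ^ j = u2 p q ^ s := by
        rw [← pow_add]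
        congr 1
        omega
      have hsgn : (-1:ℂ)^(s-j) * (-1:ℂ)^j = (-1:ℂ)^s := by
        rw [← pow_add]
        congr 1
        omega
      rw [hneg, show lam * b j * (-1:ℂ)^s = lam * b j * ((-1:ℂ)^(s-j) * (-1)^j) from by
        rw [hsgn], show u2 p q ^ s * Pk * Qi = (u2 p q ^ (s-j) * u2 p q ^ j) * Pk * Qi from by
        rw [hpows]]
      simp only [smul_eq_C_mul, map_mul, map_pow, map_neg, map_one]
      ring
    have hdvd : (u2 p q + v2 p q) ∣ (u2 p q ^ s * Pk * Qi - H) := by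
      have heq : u2 p q ^ s * Pk * Qi - H
          = (∑ j ∈ range (s+1),
              (lam * b j * (-1:ℂ)^(s-j)) • (u2 p q ^ (s-j) * ((-(u2 p q))^j - v2 p q ^j)))
            * (Pk * Qi) := by
        rw [Finset.sum_mul, Finset.sum_congr rfl expand, Finset.sum_sub_distrib,
          ← Finset.sum_smul, hsum1, one_smul, ← Finset.smul_sum, ← hH]
      rw [heq]
      apply Dvd.dvd.mul_right
      apply Finset.dvd_sum
      intro j hj
      rw [smul_eq_C_mul]
      apply Dvd.dvd.mul_left
      apply dvd_mul_of_dvd_right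
      have hd := sub_dvd_pow_sub_pow (-(u2 p q)) (v2 p q) j
      rw [show -(u2 p q) - v2 p q = -(u2 p q + v2 p q) from by ring] at hd
      exact (neg_dvd).mp hd
    obtain ⟨R, hR⟩ := hdvd
    exact ⟨R, by rw [hr2, ← hR]⟩

end
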